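/- Let V be a finite set and G a loopless directed graph on V (given by an irreflexive arc relation). Let G' be the directed graph on the vertex set V × Bool whose arc set is E_1 ∪ E_2, where E_1 = {((u, false), (u, true)) : u ∈ V} and E_2 = {((u, true), (v, false)) : (u, v) is an arc of G}. Then for every natural number k, the following are equivalent: (i) there exists X ⊆ V with |X| ≤ k such that the subgraph of G induced on V ∖ X is acyclic; (ii) there exists a set F of arcs of G' with |F| ≤ k such that the directed graph obtained from G' by deleting the arcs in F is acyclic. -/

import Mathlib

/-- The arcs of the directed graph `G'` of the reduction from `FVS` to `FAS`: each vertex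
`u` is split into `(u, false) → (u, true)`, and each arc `(u, v)` of `G` becomes the arc
`(u, true) → (v, false)`. -/
def splitArc {V : Type*} (Adj : V → V → Prop) : V × Bool → V × Bool → Prop :=
  fun p q =>
    (p.2 = false ∧ q = (p.1, true)) ∨ (p.2 = true ∧ q.2 = false ∧ Adj p.1 q.1)

section Aux

variable {V : Type*} (Adj : V → V → Prop) (X : Finset V)

/-- abbreviation for the restricted relation -/
private def Rrel : V → V → Prop := fun a b => Adj a b ∧ a ∉ X ∧ b ∉ X

/-- invariant carried along paths in the split graph -/
private def Pred (p q : V × Bool) : Prop :=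
  (p.2 = false → q.2 = true →
      p.1 ∉ X ∧ q.1 ∉ X ∧ Relation.ReflTransGen (Rrel Adj X) p.1 q.1) ∧
  (p.2 = false → q.2 = false →
      p.1 ∉ X ∧ ∃ w, Relation.ReflTransGen (Rrel Adj X) p.1 w ∧ w ∉ X ∧ Adj w q.1) ∧
  (p.2 = true → q.2 = true →
      q.1 ∉ X ∧ ∃ w, Adj p.1 w ∧ w ∉ X ∧ Relation.ReflTransGen (Rrel Adj X) w q.1) ∧
  (p.2 = true → q.2 = false →
      ∃ w, Adj p.1 w ∧ (w = q.1 ∨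
        (w ∉ X ∧ ∃ w', Relation.ReflTransGen (Rrel Adj X) w w' ∧ w' ∉ X ∧ Adj w' q.1)))

private lemma pred_of_step {S : V × Bool → V × Bool → Prop}
    (hS : ∀ p q, S p q →
      (p.2 = false ∧ q = (p.1, true) ∧ p.1 ∉ X) ∨
      (p.2 = true ∧ q.2 = false ∧ Adj p.1 q.1)) :
    ∀ p q, S p q → Pred Adj X p q := by
  intro p q h
  rcases hS p q h with ⟨hp, rfl, hmem⟩ | ⟨hp, hq, hadj⟩
  · refine ⟨fun _ _ => ⟨hmem, hmem, Relation.ReflTransGen.refl⟩, ?_, ?_, ?_⟩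
    · intro _ hq; simp at hq
    · intro hp'; rw [hp] at hp'; simp at hp'
    · intro hp'; rw [hp] at hp'; simp at hp'
  · refine ⟨?_, ?_, ?_, ?_⟩
    · intro hp'; rw [hp] at hp'; simp at hp'
    · intro hp'; rw [hp] at hp'; simp at hp'
    · intro _ hq'; rw [hq] at hq'; simp at hq'
    · intro _ _; exact ⟨q.1, hadj, Or.inl rfl⟩

private lemma pred_head {S : V × Bool → V × Bool → Prop}
    (hS : ∀ p q, S p q →
      (p.2 = false ∧ q = (p.1, true) ∧ p.1 ∉ X) ∨
      (p.2 = true ∧ q.2 = false ∧ Adj p.1 q.1)) :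
    ∀ p p' q, S p p' → Pred Adj X p' q → Pred Adj X p q := by
  intro p p' q h hP
  obtain ⟨P1, P2, P3, P4⟩ := hP
  rcases hS p p' h with ⟨hp, rfl, hmem⟩ | ⟨hp, hq, hadj⟩
  · -- step (u,false) → (u,true)
    refine ⟨?_, ?_, ?_, ?_⟩
    · intro _ hq
      obtain ⟨hq1, w, hadj, hw, hrt⟩ := P3 rfl hq
      exact ⟨hmem, hq1, Relation.ReflTransGen.head ⟨hadj, hmem, hw⟩ hrt⟩
    · intro _ hq
      obtain ⟨w, hadj, hw⟩ := P4 rfl hq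
      rcases hw with rfl | ⟨hwX, w', hrt, hw', hadj'⟩
      · exact ⟨hmem, p.1, Relation.ReflTransGen.refl, hmem, hadj⟩
      · exact ⟨hmem, w', Relation.ReflTransGen.head ⟨hadj, hmem, hwX⟩ hrt, hw', hadj'⟩
    · intro hp'; rw [hp] at hp'; simp at hp'
    · intro hp'; rw [hp] at hp'; simp at hp'
  · -- step (u,true) → (v,false)  with Adj u v
    refine ⟨?_, ?_, ?_, ?_⟩
    · intro hp'; rw [hp] at hp'; simp at hp'
    · intro hp'; rw [hp] at hp'; simp at hp'
    · intro _ hq'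
      obtain ⟨hv, hz1, hrt⟩ := P1 hq hq'
      exact ⟨hz1, p'.1, hadj, hv, hrt⟩
    · intro _ hq'
      obtain ⟨hv, w', hrt, hw', hadj'⟩ := P2 hq hq'
      exact ⟨p'.1, hadj, Or.inr ⟨hv, w', hrt, hw', hadj'⟩⟩

private lemma pred_of_transGen {S : V × Bool → V × Bool → Prop}
    (hS : ∀ p q, S p q →
      (p.2 = false ∧ q = (p.1, true) ∧ p.1 ∉ X) ∨
      (p.2 = true ∧ q.2 = false ∧ Adj p.1 q.1)) :
    ∀ p q, Relation.TransGen S p q → Pred Adj X p q := by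
  intro p q h
  induction h using Relation.TransGen.head_induction_on with
  | single h => exact pred_of_step Adj X hS _ _ h
  | head h _ ih => exact pred_head Adj X hS _ _ _ h ih

end Aux

/-- Reduction from `Directed Feedback Vertex Set` to `Directed Feedback Arc Set`: for a
loopless directed graph `G` on `V` and every `k`, there is a set `X` of at most `k`
vertices whose removal makes `G` acyclic iff there is a set `F` of at most `k` arcs of the
split graph `G'` whose deletion makes `G'` acyclic. -/
theorem fvs_iff_fas_of_split {V : Type*} [Fintype V]
    (Adj : V → V → Prop) (hirr : ∀ v, ¬ Adj v v) (k : ℕ) :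
    (∃ X : Finset V, X.card ≤ k ∧
      ∀ v : V, ¬ Relation.TransGen (fun a b => Adj a b ∧ a ∉ X ∧ b ∉ X) v v) ↔
    (∃ F : Finset ((V × Bool) × (V × Bool)),
      (∀ q ∈ F, splitArc Adj q.1 q.2) ∧ F.card ≤ k ∧
      ∀ p : V × Bool,
        ¬ Relation.TransGen (fun a b => splitArc Adj a b ∧ (a, b) ∉ F) p p) := by
  classical
  constructor
  · rintro ⟨X, hXk, hX⟩
    refine ⟨X.image (fun u => ((u, false), (u, true))), ?_, Finset.card_image_le.trans hXk, ?_⟩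
    · rintro q hq
      simp only [Finset.mem_image] at hq
      obtain ⟨u, _, rfl⟩ := hq
      exact Or.inl ⟨rfl, rfl⟩
    · intro p hp
      set F : Finset ((V × Bool) × (V × Bool)) := X.image (fun u => ((u, false), (u, true)))
      have hS : ∀ a b : V × Bool, (splitArc Adj a b ∧ (a, b) ∉ F) →
          (a.2 = false ∧ b = (a.1, true) ∧ a.1 ∉ X) ∨
          (a.2 = true ∧ b.2 = false ∧ Adj a.1 b.1) := by
        rintro a b ⟨hab, hnF⟩
        rcases hab with ⟨h1, h2⟩ | h
        · refine Or.inl ⟨h1, h2, fun hmem => hnF ?_⟩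
          simp only [F, Finset.mem_image]
          refine ⟨a.1, hmem, ?_⟩
          rw [h2]
          ext <;> simp [h1]
        · exact Or.inr h
      have hpred := pred_of_transGen Adj X hS p p hp
      obtain ⟨P1, P2, P3, P4⟩ := hpred
      cases hb : p.2 with
      | false =>
        obtain ⟨hmem, w, hrt, hw, hadj⟩ := P2 hb hb
        exact hX p.1 (Relation.TransGen.tail' (Relation.ReflTransGen.mono (fun a b h => h) _ _ hrt)
          ⟨hadj, hw, hmem⟩)
      | true =>
        obtain ⟨hmem, w, hadj, hw, hrt⟩ := P3 hb hb
        exact hX p.1 (Relation.TransGen.head' ⟨hadj, hmem, hw⟩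
          (Relation.ReflTransGen.mono (fun a b h => h) _ _ hrt))
  · rintro ⟨F, hFarc, hFk, hF⟩
    refine ⟨F.image (fun q => q.1.1), Finset.card_image_le.trans hFk, ?_⟩
    set X : Finset V := F.image (fun q => q.1.1) with hXdef
    intro v hv
    have lift : ∀ a b : V, Relation.TransGen (fun a b => Adj a b ∧ a ∉ X ∧ b ∉ X) a b →
        Relation.TransGen (fun p q => splitArc Adj p q ∧ (p, q) ∉ F) (a, false) (b, false) := by
      intro a b h
      induction h with
      | single h => ?_
      | tail _ h ih =>
        refine ih.trans ?_
        obtain ⟨hadj, ha, hb⟩ := h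
        rename_i c _
        refine Relation.TransGen.head ⟨Or.inl ⟨rfl, rfl⟩, ?_⟩ (Relation.TransGen.single
          ⟨Or.inr ⟨rfl, rfl, hadj⟩, ?_⟩)
        · intro hmem
          exact ha (by simp only [X, Finset.mem_image]; exact ⟨_, hmem, rfl⟩)
        · intro hmem
          exact ha (by simp only [X, Finset.mem_image]; exact ⟨_, hmem, rfl⟩)
      all_goals {
        obtain ⟨hadj, ha, hb⟩ := h
        refine Relation.TransGen.head ⟨Or.inl ⟨rfl, rfl⟩, ?_⟩ (Relation.TransGen.single
          ⟨Or.inr ⟨rfl, rfl, hadj⟩, ?_⟩)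
        · intro hmem
          exact ha (by simp only [X, Finset.mem_image]; exact ⟨_, hmem, rfl⟩)
        · intro hmem
          exact ha (by simp only [X, Finset.mem_image]; exact ⟨_, hmem, rfl⟩)
      }
    exact hF (v, false) (lift v v hv)
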